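/- Let (M_t)_{t≥1} and (W_t)_{t≥1} be sequences in R^{p×d} and let (P_t)_{t≥1} be symmetric positive semidefinite matrices in R^{p×p} with spectral norm ‖I_p − P_t‖ ≤ 1 for all t, satisfying the recursion M_{t+1} = (I_p − P_t) M_t + W_t. Suppose there exist an integer τ ≥ 1 and a constant α₀ ∈ (0, 1] such that for every k ≥ 0 the ordered product (I_p − P_{(k+1)τ})···(I_p − P_{kτ+2})(I_p − P_{kτ+1}) has spectral norm at most 1 − α₀, and suppose there exist constants c₂, c₃ > 0 such that ‖W_t‖ ≤ (c₃/t)·‖M_t‖ + c₂ for all t ≥ 1 (spectral norms). Then the sequence (M_t) is uniformly bounded: there exists a constant C₀ such that ‖M_t‖ ≤ C₀ for all t ≥ 1. -/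

import Mathlib

open Matrix
open scoped Matrix.Norms.L2Operator

private lemma stmt11_prodStep {Mo : Type*} [Monoid Mo] (g : ℕ → Mo) (n : ℕ) :
    ((List.range (n+1)).map (fun j => g (n + 1 - 1 - j))).prod
      = g n * ((List.range n).map (fun j => g (n - 1 - j))).prod := by
  rw [List.range_succ_eq_map, List.map_cons, List.prod_cons, List.map_map]
  have hf : ((fun j => g (n + 1 - 1 - j)) ∘ Nat.succ) = (fun j => g (n - 1 - j)) := by
    funext a
    show g (n + 1 - 1 - (a+1)) = g (n - 1 - a)
    rw [show n + 1 - 1 - (a+1) = n - 1 - a from by omega]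
  rw [hf, show n + 1 - 1 - 0 = n from by omega]

set_option maxHeartbeats 1600000 in
/-- If `M_{t+1} = (I − P_t) M_t + W_t` with `P_t` symmetric PSD, `‖I − P_t‖ ≤ 1`,
every block of `τ` consecutive factors contracts by `1 − α₀`, and
`‖W_t‖ ≤ (c₃/t)‖M_t‖ + c₂`, then `(M_t)` is uniformly bounded in spectral norm. -/
theorem stmt_11 (p d : ℕ) (M W : ℕ → Matrix (Fin p) (Fin d) ℝ)
    (P : ℕ → Matrix (Fin p) (Fin p) ℝ)
    (hPpsd : ∀ t, 1 ≤ t → (P t).PosSemidef)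
    (hPsymm : ∀ t, 1 ≤ t → (P t).IsSymm)
    (hPle : ∀ t, 1 ≤ t → ‖(1 : Matrix (Fin p) (Fin p) ℝ) - P t‖ ≤ 1)
    (hrec : ∀ t, 1 ≤ t → M (t + 1) = ((1 : Matrix (Fin p) (Fin p) ℝ) - P t) * M t + W t)
    (τ : ℕ) (hτ : 1 ≤ τ) (α₀ : ℝ) (hα₀ : 0 < α₀) (hα₁ : α₀ ≤ 1)
    (hprod : ∀ k : ℕ,
      ‖((List.range τ).map
          (fun j => (1 : Matrix (Fin p) (Fin p) ℝ) - P ((k + 1) * τ - j))).prod‖ ≤ 1 - α₀)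
    (c₂ c₃ : ℝ) (hc₂ : 0 < c₂) (hc₃ : 0 < c₃)
    (hW : ∀ t : ℕ, 1 ≤ t → ‖W t‖ ≤ (c₃ / t) * ‖M t‖ + c₂) :
    ∃ C₀ : ℝ, ∀ t : ℕ, 1 ≤ t → ‖M t‖ ≤ C₀ := by
  have hc₃1 : (0:ℝ) < 1 + c₃ := by linarith
  obtain ⟨B, hBdef⟩ : ∃ B : ℝ, B = (1 + c₃)^τ := ⟨_, rfl⟩
  have hτR : (1:ℝ) ≤ (τ:ℝ) := by exact_mod_cast hτ
  have hBpos : 0 < B := by rw [hBdef]; exact pow_pos hc₃1 τ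
  have hB1 : (1:ℝ) ≤ B := by rw [hBdef]; exact one_le_pow₀ (by linarith)
  have hτcB : (0:ℝ) ≤ (τ:ℝ)*c₃*B :=
    mul_nonneg (mul_nonneg (by linarith) hc₃.le) hBpos.le
  -- step bound
  have step : ∀ t : ℕ, 1 ≤ t → ‖M (t+1)‖ ≤ (1 + c₃) * (‖M t‖ + c₂) := by
    intro t ht
    have h1 : ‖M (t+1)‖ ≤ ‖((1 : Matrix (Fin p) (Fin p) ℝ) - P t) * M t‖ + ‖W t‖ := by
      rw [hrec t ht]; exact norm_add_le _ _
    have h2 : ‖((1 : Matrix (Fin p) (Fin p) ℝ) - P t) * M t‖ ≤ ‖M t‖ := by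
      calc ‖((1 : Matrix (Fin p) (Fin p) ℝ) - P t) * M t‖
          ≤ ‖(1 : Matrix (Fin p) (Fin p) ℝ) - P t‖ * ‖M t‖ := Matrix.l2_opNorm_mul _ _
        _ ≤ 1 * ‖M t‖ := mul_le_mul_of_nonneg_right (hPle t ht) (norm_nonneg _)
        _ = ‖M t‖ := one_mul _
    have h3 := hW t ht
    have h4 : c₃ / (t : ℝ) ≤ c₃ := by
      apply div_le_self hc₃.le
      exact_mod_cast ht
    nlinarith [norm_nonneg (M t)]
  -- growth bound
  have grow : ∀ s : ℕ, 1 ≤ s → ∀ i : ℕ, ‖M (s + i)‖ ≤ (1 + c₃)^i * (‖M s‖ + i * c₂) := by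
    intro s hs i
    induction i with
    | zero => simp
    | succ i ih =>
      have h1 : 1 ≤ s + i := by omega
      have h2 := step (s + i) h1
      have h3 : (1:ℝ) ≤ (1 + c₃)^i := one_le_pow₀ (by linarith)
      have h5 : ‖M (s + (i+1))‖ = ‖M ((s+i) + 1)‖ := by ring_nf
      rw [h5]
      push_cast
      calc ‖M (s + i + 1)‖ ≤ (1 + c₃) * (‖M (s + i)‖ + c₂) := h2
        _ ≤ (1 + c₃) * ((1 + c₃)^i * (‖M s‖ + i * c₂) + (1 + c₃)^i * c₂) := by
            have h7 : c₂ ≤ (1 + c₃)^i * c₂ := le_mul_of_one_le_left hc₂.le h3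
            nlinarith
        _ = (1 + c₃)^(i+1) * (‖M s‖ + (i + 1) * c₂) := by ring
  -- block contraction
  have block : ∀ k : ℕ, ‖M (k*τ+1+τ)‖ ≤ (1-α₀) * ‖M (k*τ+1)‖
      + ∑ i ∈ Finset.range τ, ‖W (k*τ+1+i)‖ := by
    intro k
    set s := k*τ+1 with hsdef
    have key : ∀ n : ℕ, ∃ R, M (s + n) =
        ((List.range n).map (fun j => (1 : Matrix (Fin p) (Fin p) ℝ) - P (s + (n - 1 - j)))).prod
          * M s + R ∧ ‖R‖ ≤ ∑ i ∈ Finset.range n, ‖W (s+i)‖ := by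
      intro n
      induction n with
      | zero => exact ⟨0, by simp, by simp⟩
      | succ n ih =>
        obtain ⟨R, hR, hRn⟩ := ih
        have h1 : 1 ≤ s + n := by omega
        refine ⟨((1 : Matrix (Fin p) (Fin p) ℝ) - P (s+n)) * R + W (s+n), ?_, ?_⟩
        · have h2 : M (s + (n+1)) =
              ((1 : Matrix (Fin p) (Fin p) ℝ) - P (s+n)) * M (s+n) + W (s+n) := by
            have h := hrec (s+n) h1
            have he : s + (n+1) = (s+n) + 1 := by omega
            rw [he, h]
          have h3 := stmt11_prodStep (fun j => (1 : Matrix (Fin p) (Fin p) ℝ) - P (s + j)) n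
          rw [h2, hR]
          calc ((1 : Matrix (Fin p) (Fin p) ℝ) - P (s+n)) *
                (((List.range n).map
                  (fun j => (1 : Matrix (Fin p) (Fin p) ℝ) - P (s + (n - 1 - j)))).prod * M s + R)
                + W (s+n)
              = (((1 : Matrix (Fin p) (Fin p) ℝ) - P (s+n)) *
                ((List.range n).map
                  (fun j => (1 : Matrix (Fin p) (Fin p) ℝ) - P (s + (n - 1 - j)))).prod) * M s
                + (((1 : Matrix (Fin p) (Fin p) ℝ) - P (s+n)) * R + W (s+n)) := by
                rw [Matrix.mul_add, ← Matrix.mul_assoc, add_assoc]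
            _ = _ := by rw [← h3]
        · have h4 : ‖((1 : Matrix (Fin p) (Fin p) ℝ) - P (s+n)) * R + W (s+n)‖
              ≤ ‖R‖ + ‖W (s+n)‖ := by
            calc ‖((1 : Matrix (Fin p) (Fin p) ℝ) - P (s+n)) * R + W (s+n)‖
                ≤ ‖((1 : Matrix (Fin p) (Fin p) ℝ) - P (s+n)) * R‖ + ‖W (s+n)‖ := norm_add_le _ _
              _ ≤ ‖(1 : Matrix (Fin p) (Fin p) ℝ) - P (s+n)‖ * ‖R‖ + ‖W (s+n)‖ :=
                  add_le_add (Matrix.l2_opNorm_mul _ _) le_rfl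
              _ ≤ 1 * ‖R‖ + ‖W (s+n)‖ :=
                  add_le_add (mul_le_mul_of_nonneg_right (hPle _ h1) (norm_nonneg _)) le_rfl
              _ = ‖R‖ + ‖W (s+n)‖ := by ring
          rw [Finset.sum_range_succ]
          linarith
    obtain ⟨R, hR, hRn⟩ := key τ
    have hid : ((List.range τ).map
          (fun j => (1 : Matrix (Fin p) (Fin p) ℝ) - P (s + (τ - 1 - j)))).prod =
        ((List.range τ).map
          (fun j => (1 : Matrix (Fin p) (Fin p) ℝ) - P ((k + 1) * τ - j))).prod := by
      congr 1
      apply List.map_congr_left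
      intro j hj
      have hjτ : j < τ := List.mem_range.mp hj
      have hm : (k+1)*τ = k*τ + τ := by ring
      have hidx : s + (τ - 1 - j) = (k+1)*τ - j := by omega
      rw [hidx]
    have hnorm : ‖((List.range τ).map
        (fun j => (1 : Matrix (Fin p) (Fin p) ℝ) - P (s + (τ - 1 - j)))).prod‖ ≤ 1 - α₀ := by
      rw [hid]; exact hprod k
    calc ‖M (s + τ)‖ = ‖((List.range τ).map
          (fun j => (1 : Matrix (Fin p) (Fin p) ℝ) - P (s + (τ - 1 - j)))).prod * M s + R‖ := by
          rw [hR]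
      _ ≤ ‖((List.range τ).map
          (fun j => (1 : Matrix (Fin p) (Fin p) ℝ) - P (s + (τ - 1 - j)))).prod * M s‖ + ‖R‖ :=
          norm_add_le _ _
      _ ≤ ‖((List.range τ).map
          (fun j => (1 : Matrix (Fin p) (Fin p) ℝ) - P (s + (τ - 1 - j)))).prod‖ * ‖M s‖ + ‖R‖ :=
          add_le_add (Matrix.l2_opNorm_mul _ _) le_rfl
      _ ≤ (1-α₀) * ‖M s‖ + ∑ i ∈ Finset.range τ, ‖W (s+i)‖ :=
          add_le_add (mul_le_mul_of_nonneg_right hnorm (norm_nonneg _)) hRn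
  -- bound on ‖M (k*τ+1+i)‖ within a block
  have wbound : ∀ k i : ℕ, i ≤ τ → ‖M (k*τ+1+i)‖ ≤ B * (‖M (k*τ+1)‖ + τ*c₂) := by
    intro k i hi
    calc ‖M (k*τ+1+i)‖ ≤ (1 + c₃)^i * (‖M (k*τ+1)‖ + i * c₂) := grow (k*τ+1) (by omega) i
      _ ≤ B * (‖M (k*τ+1)‖ + τ*c₂) := by
          apply mul_le_mul
          · rw [hBdef]; exact pow_le_pow_right₀ (by linarith) hi
          · have : (i:ℝ) ≤ τ := by exact_mod_cast hi
            nlinarith [norm_nonneg (M (k*τ+1))]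
          · positivity
          · exact hBpos.le
  -- sum of W norms over a block
  have wsum : ∀ k : ℕ, ∑ i ∈ Finset.range τ, ‖W (k*τ+1+i)‖
      ≤ (τ*c₃*B/((k*τ+1:ℕ):ℝ)) * ‖M (k*τ+1)‖
        + (τ*c₃*B/((k*τ+1:ℕ):ℝ)) * (τ*c₂) + τ*c₂ := by
    intro k
    have hspos : (0:ℝ) < ((k*τ+1:ℕ):ℝ) := by positivity
    have hterm : ∀ i ∈ Finset.range τ, ‖W (k*τ+1+i)‖
        ≤ (c₃/((k*τ+1:ℕ):ℝ)) * (B * (‖M (k*τ+1)‖ + τ*c₂)) + c₂ := by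
      intro i hi
      have hiτ : i < τ := Finset.mem_range.mp hi
      calc ‖W (k*τ+1+i)‖ ≤ (c₃/((k*τ+1+i:ℕ):ℝ)) * ‖M (k*τ+1+i)‖ + c₂ := hW _ (by omega)
        _ ≤ (c₃/((k*τ+1:ℕ):ℝ)) * (B * (‖M (k*τ+1)‖ + τ*c₂)) + c₂ := by
            have h1 : c₃/((k*τ+1+i:ℕ):ℝ) ≤ c₃/((k*τ+1:ℕ):ℝ) := by
              apply div_le_div_of_nonneg_left hc₃.le hspos
              exact_mod_cast Nat.le_add_right _ _
            exact add_le_add (mul_le_mul h1 (wbound k i hiτ.le) (norm_nonneg _)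
              (by positivity)) le_rfl
    calc ∑ i ∈ Finset.range τ, ‖W (k*τ+1+i)‖
        ≤ ∑ _i ∈ Finset.range τ, ((c₃/((k*τ+1:ℕ):ℝ)) * (B * (‖M (k*τ+1)‖ + τ*c₂)) + c₂) :=
          Finset.sum_le_sum hterm
      _ = (τ:ℝ) * ((c₃/((k*τ+1:ℕ):ℝ)) * (B * (‖M (k*τ+1)‖ + τ*c₂)) + c₂) := by
          rw [Finset.sum_const, Finset.card_range, nsmul_eq_mul]
      _ = (τ*c₃*B/((k*τ+1:ℕ):ℝ)) * ‖M (k*τ+1)‖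
          + (τ*c₃*B/((k*τ+1:ℕ):ℝ)) * (τ*c₂) + τ*c₂ := by ring
  obtain ⟨D, hDdef⟩ : ∃ D : ℝ, D = (τ:ℝ)*c₃*B*((τ:ℝ)*c₂) + (τ:ℝ)*c₂ := ⟨_, rfl⟩
  have hDpos : 0 < D := by
    rw [hDdef]
    nlinarith [mul_nonneg hτcB (mul_nonneg (by linarith : (0:ℝ) ≤ (τ:ℝ)) hc₂.le)]
  -- choose K
  obtain ⟨K, hK⟩ := exists_nat_gt (2*τ*c₃*B/α₀)
  -- contraction for k ≥ K
  have contract : ∀ k : ℕ, K ≤ k → ‖M ((k+1)*τ+1)‖ ≤ (1-α₀/2) * ‖M (k*τ+1)‖ + D := by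
    intro k hk
    have hidx : (k+1)*τ+1 = k*τ+1+τ := by ring
    rw [hidx]
    have hb := block k
    have hw := wsum k
    have hsK : (K:ℝ) ≤ ((k*τ+1:ℕ):ℝ) := by
      have : K ≤ k*τ+1 := by nlinarith [Nat.le_mul_of_pos_right k (show 0 < τ by omega)]
      exact_mod_cast this
    have hspos : (0:ℝ) < ((k*τ+1:ℕ):ℝ) := by positivity
    have hsmall : τ*c₃*B/((k*τ+1:ℕ):ℝ) ≤ α₀/2 := by
      rw [div_le_iff₀ hspos]
      rw [div_lt_iff₀ hα₀] at hK
      nlinarith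
    have hsmall2 : τ*c₃*B/((k*τ+1:ℕ):ℝ) ≤ τ*c₃*B := by
      apply div_le_self hτcB
      have : (1:ℕ) ≤ k*τ+1 := by omega
      exact_mod_cast this
    have hint1 : (τ*c₃*B/((k*τ+1:ℕ):ℝ)) * ‖M (k*τ+1)‖ ≤ (α₀/2) * ‖M (k*τ+1)‖ :=
      mul_le_mul_of_nonneg_right hsmall (norm_nonneg _)
    have hint2 : (τ*c₃*B/((k*τ+1:ℕ):ℝ)) * (τ*c₂) ≤ τ*c₃*B*(τ*c₂) :=
      mul_le_mul_of_nonneg_right hsmall2 (by positivity)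
    rw [hDdef]
    nlinarith [norm_nonneg (M (k*τ+1))]
  obtain ⟨X, hXdef⟩ : ∃ X : ℝ, X = max ‖M (K*τ+1)‖ (2*D/α₀) := ⟨_, rfl⟩
  have hXD : 2*D/α₀ ≤ X := by rw [hXdef]; exact le_max_right _ _
  have h2D : 2*D ≤ α₀ * X := by
    have h := mul_le_mul_of_nonneg_right hXD hα₀.le
    rw [div_mul_cancel₀ _ hα₀.ne'] at h
    linarith [h]
  have boundedSub : ∀ n : ℕ, ‖M ((K+n)*τ+1)‖ ≤ X := by
    intro n
    induction n with
    | zero => rw [hXdef]; exact le_max_left _ _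
    | succ n ih =>
      have hc := contract (K+n) (Nat.le_add_right _ _)
      have hmono : (1-α₀/2) * ‖M ((K+n)*τ+1)‖ ≤ (1-α₀/2) * X :=
        mul_le_mul_of_nonneg_left ih (by linarith)
      have he : K+(n+1) = (K+n)+1 := rfl
      rw [he]
      linarith
  obtain ⟨Y, hYdef⟩ : ∃ Y : ℝ, Y = (1+c₃)^(K*τ) * (‖M 1‖ + ((K*τ:ℕ):ℝ) * c₂) := ⟨_, rfl⟩
  refine ⟨B * (max X Y + τ*c₂), ?_⟩
  intro t ht
  obtain ⟨k, r, hrτ, ht'⟩ : ∃ k r, r < τ ∧ t = (k*τ+1) + r := by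
    refine ⟨(t-1)/τ, (t-1)%τ, Nat.mod_lt _ (by omega), ?_⟩
    have hdm := Nat.div_add_mod (t-1) τ
    have hcomm : τ * ((t-1)/τ) = (t-1)/τ * τ := Nat.mul_comm _ _
    omega
  have h1 : ‖M t‖ ≤ (1+c₃)^r * (‖M (k*τ+1)‖ + r*c₂) := by
    rw [ht']; exact grow (k*τ+1) (by omega) r
  have h2 : ‖M (k*τ+1)‖ ≤ max X Y := by
    rcases le_or_gt K k with h | h
    · have hk : k = K + (k-K) := by omega
      rw [hk]
      exact le_trans (boundedSub (k-K)) (le_max_left _ _)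
    · have he : k*τ+1 = 1 + k*τ := by omega
      have hg := grow 1 le_rfl (k*τ)
      have hkτ : k*τ ≤ K*τ := Nat.mul_le_mul h.le (le_refl τ)
      have hY : (1+c₃)^(k*τ) * (‖M 1‖ + ((k*τ:ℕ):ℝ) * c₂) ≤ Y := by
        rw [hYdef]
        apply mul_le_mul
        · exact pow_le_pow_right₀ (by linarith) hkτ
        · have : ((k*τ:ℕ):ℝ) ≤ ((K*τ:ℕ):ℝ) := by exact_mod_cast hkτ
          nlinarith [norm_nonneg (M 1)]
        · positivity
        · positivity
      rw [he]
      exact le_trans hg (le_trans hY (le_max_right _ _))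
  calc ‖M t‖ ≤ (1+c₃)^r * (‖M (k*τ+1)‖ + r*c₂) := h1
    _ ≤ B * (max X Y + τ*c₂) := by
        apply mul_le_mul
        · rw [hBdef]; exact pow_le_pow_right₀ (by linarith) hrτ.le
        · have : (r:ℝ) ≤ τ := by exact_mod_cast hrτ.le
          nlinarith [norm_nonneg (M (k*τ+1))]
        · positivity
        · exact hBpos.le
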